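/- If M is a simple-direct-projective abelian group, then its torsion subgroup T(M) is simple-direct-projective. -/

import Mathlib

section Defs

variable (R : Type*) [Ring R] (M : Type*) [AddCommGroup M] [Module R M]

/-- `K` is a small (superfluous) submodule of `M`. -/
def SmallSubmodule (K : Submodule R M) : Prop :=
  ∀ N : Submodule R M, K ⊔ N = ⊤ → N = ⊤

/-- `A` is a direct summand of `M`. -/
def IsDirectSummand (A : Submodule R M) : Prop :=
  ∃ B : Submodule R M, IsCompl A B

/-- The socle of `M`: the sum of all simple submodules. -/
def moduleSocle : Submodule R M :=
  sSup {S : Submodule R M | IsSimpleModule R S}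

/-- The (Jacobson) radical of `M`: the intersection of all maximal submodules. -/
def moduleRad : Submodule R M :=
  sInf {S : Submodule R M | IsCoatom S}

/-- `M` is simple-direct-projective. -/
def SimpleDirectProjective : Prop :=
  ∀ A B : Submodule R M, IsSimpleModule R B → Nonempty ((M ⧸ A) ≃ₗ[R] B) →
    IsDirectSummand R M B → IsDirectSummand R M A

/-- `M` is simple-direct-injective. -/
def SimpleDirectInjective : Prop :=
  ∀ A B : Submodule R M, IsSimpleModule R A → IsSimpleModule R B →
    Nonempty (A ≃ₗ[R] B) → IsDirectSummand R M B → IsDirectSummand R M A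

/-- `L` is a coclosed submodule of `M`. -/
def CoclosedSubmodule (L : Submodule R M) : Prop :=
  ∀ K : Submodule R M, K ≤ L →
    SmallSubmodule R (M ⧸ K) (L.map K.mkQ) → K = L

end Defs

/-- The `p`-primary component of an abelian group `M`. -/
def primaryComponent (M : Type*) [AddCommGroup M] (p : ℕ) : Submodule ℤ M :=
  Submodule.torsion' ℤ M (Submonoid.powers (p : ℤ))



section Aux

theorem key_summand {M : Type*} [AddCommGroup M] {p : ℕ} (hp : p.Prime)
    (B : Submodule ℤ M)
    (hpure : ∀ m : M, (p : ℤ) • m ∈ B → (p : ℤ) • m = 0) :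
    ∃ N : Submodule ℤ M, IsCompl B N := by
  set pM : Submodule ℤ M := LinearMap.range ((p : ℤ) • (LinearMap.id : M →ₗ[ℤ] M)) with hpM
  have hpMmem : ∀ m : M, (p : ℤ) • m ∈ pM := fun m => ⟨m, rfl⟩
  set S : Set (Submodule ℤ M) := {N | Disjoint B N ∧ pM ≤ N} with hS
  have hpM_mem : pM ∈ S := by
    refine ⟨?_, le_rfl⟩
    rw [Submodule.disjoint_def]
    intro x hxB hxpM
    obtain ⟨m, hm⟩ := hxpM
    simp only [LinearMap.smul_apply, LinearMap.id_apply] at hm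
    rw [← hm] at hxB ⊢
    exact hpure m hxB
  obtain ⟨N, hNS, hNmax⟩ :
      ∃ N, N ∈ S ∧ ∀ N' ∈ S, N ≤ N' → N' = N := by
    obtain ⟨N, hle, hmax⟩ := zorn_le_nonempty₀ S (fun c hcS hc y hy => by
      refine ⟨sSup c, ⟨?_, ?_⟩, fun z hz => le_sSup hz⟩
      · rw [Submodule.disjoint_def]
        intro x hxB hxSup
        obtain ⟨N', hN'c, hxN'⟩ :=
          (Submodule.mem_sSup_of_directed ⟨y, hy⟩ hc.directedOn).1 hxSup
        exact (Submodule.mem_bot ℤ).1 ((hcS hN'c).1.le_bot ⟨hxB, hxN'⟩)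
      · exact le_trans (hcS hy).2 (le_sSup hy)) pM hpM_mem
    exact ⟨N, hmax.prop, fun N' hN' hle' => le_antisymm (hmax.le_of_ge hN' hle') hle'⟩
  refine ⟨N, hNS.1, ?_⟩
  rw [codisjoint_iff, eq_top_iff]
  intro x _
  by_contra hx
  have hnotS : N ⊔ Submodule.span ℤ {x} ∉ S := by
    intro h
    have := hNmax _ h le_sup_left
    exact hx (this ▸ Submodule.mem_sup_right
      (Submodule.mem_sup_right (Submodule.mem_span_singleton_self x)))
  have hbig : ¬ Disjoint B (N ⊔ Submodule.span ℤ {x}) := by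
    intro h
    exact hnotS ⟨h, le_trans hNS.2 le_sup_left⟩
  rw [Submodule.disjoint_def] at hbig
  push_neg at hbig
  obtain ⟨b, hbB, hbN', hbne⟩ := hbig
  obtain ⟨n, hnN, z, hz, hnz⟩ := Submodule.mem_sup.1 hbN'
  obtain ⟨k, rfl⟩ := Submodule.mem_span_singleton.1 hz
  by_cases hdvd : (p : ℤ) ∣ k
  · obtain ⟨k', rfl⟩ := hdvd
    have hkx : ((p : ℤ) * k') • x ∈ N := by
      rw [mul_smul]
      exact hNS.2 (hpMmem (k' • x))
    have hbN : b ∈ N := by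
      rw [← hnz]; exact N.add_mem hnN hkx
    exact hbne ((Submodule.mem_bot ℤ).1 (hNS.1.le_bot ⟨hbB, hbN⟩))
  · have hcop : IsCoprime (p : ℤ) k := by
      rw [Int.isCoprime_iff_gcd_eq_one]
      have hnd : ¬ p ∣ k.natAbs := fun h => hdvd (Int.dvd_natAbs.1 (Int.natCast_dvd_natCast.2 h))
      rw [Int.gcd]
      simpa [Int.natAbs_natCast] using (hp.coprime_iff_not_dvd.2 hnd)
    obtain ⟨u, v, huv⟩ := hcop
    apply hx
    have hxeq : x = v • b + (u • ((p : ℤ) • x) - v • n) := by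
      have h1 : u • ((p : ℤ) • x) + v • (k • x) = x := by
        rw [smul_smul, smul_smul, ← add_smul, huv, one_smul]
      have h2 : k • x = b - n := by rw [← hnz]; abel
      rw [h2, smul_sub] at h1
      conv_lhs => rw [← h1]
      abel
    rw [hxeq]
    exact Submodule.add_mem _ (Submodule.mem_sup_left (B.smul_mem v hbB))
      (Submodule.mem_sup_right (Submodule.sub_mem _
        (N.smul_mem u (hNS.2 (hpMmem x))) (N.smul_mem v hnN)))

/-- A nontrivial simple `ℤ`-module containing a nonzero element of finite additive
order is killed by some prime `p`. -/
theorem exists_prime_kill {N : Type*} [AddCommGroup N]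
    [hs : IsSimpleModule ℤ N] (b : N) (hb : b ≠ 0) (hfin : IsOfFinAddOrder b) :
    ∃ p : ℕ, p.Prime ∧ ∀ x : N, (p : ℤ) • x = 0 := by
  have hn0 : 0 < addOrderOf b := hfin.addOrderOf_pos
  have hn1 : addOrderOf b ≠ 1 := by
    intro h
    exact hb (AddMonoid.addOrderOf_eq_one_iff.1 h)
  obtain ⟨p, hp, hpd⟩ : ∃ p : ℕ, p.Prime ∧ p ∣ addOrderOf b :=
    ⟨(addOrderOf b).minFac, Nat.minFac_prime hn1, Nat.minFac_dvd _⟩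
  set x : N := (addOrderOf b / p) • b with hx
  have hx0 : x ≠ 0 := by
    intro h
    have hdvd : addOrderOf b ∣ addOrderOf b / p := addOrderOf_dvd_of_nsmul_eq_zero h
    have hlt : addOrderOf b / p < addOrderOf b := Nat.div_lt_self hn0 hp.one_lt
    have hpos : 0 < addOrderOf b / p := Nat.div_pos (Nat.le_of_dvd hn0 hpd) hp.pos
    exact absurd (Nat.le_of_dvd hpos hdvd) (not_le.2 hlt)
  have hpx : (p : ℤ) • x = 0 := by
    have h2 : p • x = 0 := by
      rw [hx, ← mul_smul, Nat.mul_div_cancel' hpd, addOrderOf_nsmul_eq_zero]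
    simpa [natCast_zsmul] using h2
  set K : Submodule ℤ N := Submodule.torsionBy ℤ N (p : ℤ) with hK
  have hxK : x ∈ K := (Submodule.mem_torsionBy_iff _ _).2 hpx
  have hKne : K ≠ ⊥ := by
    intro h
    rw [h, Submodule.mem_bot] at hxK
    exact hx0 hxK
  have hKtop : K = ⊤ := (hs.1.2 K).resolve_left hKne
  refine ⟨p, hp, fun y => ?_⟩
  have : y ∈ K := hKtop ▸ Submodule.mem_top
  exact (Submodule.mem_torsionBy_iff _ _).1 this

end Aux

/-- The torsion subgroup of a simple-direct-projective abelian group is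
simple-direct-projective. -/
theorem stmt_3 (M : Type*) [AddCommGroup M]
    (hM : SimpleDirectProjective ℤ M) :
    SimpleDirectProjective ℤ (Submodule.torsion ℤ M) := by
  classical
  set T := Submodule.torsion ℤ M with hTdef
  intro A B hBsimple hquot hBsum
  obtain ⟨e⟩ := hquot
  obtain ⟨C, hC⟩ := hBsum
  haveI := hBsimple
  haveI : Nontrivial B := IsSimpleModule.nontrivial ℤ B
  -- elements of T are torsion in the integer sense
  have htor : ∀ t : T, ∃ n : ℤ, n ≠ 0 ∧ n • (t : M) = 0 := by
    intro t
    obtain ⟨a, ha⟩ := (Submodule.mem_torsion_iff (M := M) (t : M)).1 t.2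
    exact ⟨(a : ℤ), nonZeroDivisors.coe_ne_zero a, by simpa [Submonoid.smul_def] using ha⟩
  have hmemT : ∀ m : M, (∃ n : ℤ, n ≠ 0 ∧ n • m = 0) → m ∈ T := by
    intro m ⟨n, hn, hnm⟩
    exact (Submodule.mem_torsion_iff (M := M) m).2
      ⟨⟨n, mem_nonZeroDivisors_of_ne_zero hn⟩, by simpa [Submonoid.smul_def] using hnm⟩
  -- find a prime p killing B
  obtain ⟨p, hp, hkB⟩ : ∃ p : ℕ, p.Prime ∧ ∀ x : B, (p : ℤ) • x = 0 := by
    obtain ⟨b, hb⟩ := exists_ne (0 : B)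
    obtain ⟨n, hn, hnb⟩ := htor (b : T)
    refine exists_prime_kill b hb ?_
    rw [isOfFinAddOrder_iff_nsmul_eq_zero]
    refine ⟨n.natAbs, Int.natAbs_pos.2 hn, ?_⟩
    have h1 : (n.natAbs : ℤ) • (b : B) = 0 := by
      rcases Int.natAbs_eq n with h | h
      · apply Subtype.ext; apply Subtype.ext
        rw [← h]
        simpa using hnb
      · apply Subtype.ext; apply Subtype.ext
        have : (n.natAbs : ℤ) = -n := by omega
        rw [this]
        simpa using hnb
    rw [natCast_zsmul] at h1
    exact h1
  have hkBT : ∀ x : T, x ∈ B → (p : ℤ) • x = 0 := by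
    intro x hx
    have := hkB ⟨x, hx⟩
    exact congrArg Subtype.val this
  -- images in M
  set A' : Submodule ℤ M := A.map T.subtype with hA'
  set B' : Submodule ℤ M := B.map T.subtype with hB'
  have hinj : Function.Injective T.subtype := Submodule.injective_subtype T
  have hA'T : A' ≤ T := Submodule.map_subtype_le T A
  have hB'T : B' ≤ T := Submodule.map_subtype_le T B
  have hpT : ∀ m : M, (p : ℤ) • m ∈ T → m ∈ T := by
    intro m hm
    obtain ⟨n, hn, hnm⟩ := htor ⟨_, hm⟩
    refine hmemT m ⟨n * p, ?_, ?_⟩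
    · exact mul_ne_zero hn (Int.natCast_ne_zero.2 hp.ne_zero)
    · rw [mul_smul]; exact hnm
  -- B' is a direct summand of M
  have hpureB' : ∀ m : M, (p : ℤ) • m ∈ B' → (p : ℤ) • m = 0 := by
    intro m hm
    have hmT : m ∈ T := hpT m (hB'T hm)
    set t : T := ⟨m, hmT⟩ with ht
    have h1 : (p : ℤ) • t ∈ B := by
      obtain ⟨x, hxB, hxm⟩ := hm
      have : x = (p : ℤ) • t := by
        apply Subtype.ext
        simpa using hxm
      rwa [← this]
    have h2 : (t : T) ∈ B ⊔ C := by rw [hC.codisjoint.eq_top]; trivial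
    obtain ⟨x, hxB, y, hyC, hxy⟩ := Submodule.mem_sup.1 h2
    have h3 : (p : ℤ) • t = (p : ℤ) • y := by
      rw [← hxy, smul_add, hkBT x hxB, zero_add]
    have h4 : (p : ℤ) • t ∈ C := h3 ▸ C.smul_mem _ hyC
    have h5 : (p : ℤ) • t = 0 :=
      (Submodule.mem_bot ℤ).1 (hC.disjoint.le_bot ⟨h1, h4⟩)
    have := congrArg Subtype.val h5
    simpa using this
  have hBsummandM : ∃ N : Submodule ℤ M, IsCompl B' N := key_summand hp B' hpureB'
  -- the quotient map
  set ψ : T →ₗ[ℤ] M ⧸ A' := A'.mkQ ∘ₗ T.subtype with hψ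
  have hker : LinearMap.ker ψ = A := by
    rw [hψ, LinearMap.ker_comp, Submodule.ker_mkQ, hA',
      Submodule.comap_map_eq_of_injective hinj]
  set D : Submodule ℤ (M ⧸ A') := LinearMap.range ψ with hD
  have eD : D ≃ₗ[ℤ] B :=
    ψ.quotKerEquivRange.symm.trans ((Submodule.quotEquivOfEq _ _ hker).trans e)
  haveI hDsimple : IsSimpleModule ℤ D := IsSimpleModule.congr eD
  have hkQuot : ∀ z : (T ⧸ A), (p : ℤ) • z = 0 := by
    intro z
    apply e.injective
    rw [map_smul, map_zero]
    exact hkB (e z)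
  have hkA : ∀ t : T, (p : ℤ) • t ∈ A := by
    intro t
    have h := hkQuot (Submodule.Quotient.mk t)
    rw [← Submodule.Quotient.mk_smul] at h
    exact (Submodule.Quotient.mk_eq_zero A).1 h
  have hpureD : ∀ z : M ⧸ A', (p : ℤ) • z ∈ D → (p : ℤ) • z = 0 := by
    intro z hz
    obtain ⟨m, rfl⟩ := A'.mkQ_surjective z
    obtain ⟨t, ht⟩ := hz
    have hmk : A'.mkQ ((t : M) - (p : ℤ) • m) = 0 := by
      rw [map_sub, map_smul]
      have : A'.mkQ (t : M) = ψ t := rfl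
      rw [this, ht]
      exact sub_self _
    have hsub : (t : M) - (p : ℤ) • m ∈ A' := (Submodule.Quotient.mk_eq_zero A').1 hmk
    have hpmT : (p : ℤ) • m ∈ T := by
      have h1 : (t : M) - ((t : M) - (p : ℤ) • m) ∈ T := T.sub_mem t.2 (hA'T hsub)
      simpa using h1
    have hmT : m ∈ T := hpT m hpmT
    have h2 : (p : ℤ) • (⟨m, hmT⟩ : T) ∈ A := hkA _
    have h3 : ψ ((p : ℤ) • (⟨m, hmT⟩ : T)) = 0 := by
      rw [← hker] at h2
      exact h2
    have h4 : ψ ((p : ℤ) • (⟨m, hmT⟩ : T)) = (p : ℤ) • A'.mkQ m := by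
      rw [map_smul]; rfl
    rw [← h4, h3]
  obtain ⟨Xb, hXb⟩ := key_summand hp D hpureD
  set X : Submodule ℤ M := Xb.comap A'.mkQ with hX
  have hAX : A' ≤ X := by
    intro a ha
    show A'.mkQ a ∈ Xb
    rw [Submodule.mkQ_apply, (Submodule.Quotient.mk_eq_zero A').2 ha]
    exact Xb.zero_mem
  have hmapX : X.map A'.mkQ = Xb := by
    rw [hX, Submodule.map_comap_eq, Submodule.range_mkQ, top_inf_eq]
  have eQuot : (M ⧸ X) ≃ₗ[ℤ] B' :=
    ((Submodule.quotientQuotientEquivQuotient A' X hAX).symm.trans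
      ((Submodule.quotEquivOfEq _ _ hmapX).trans
        ((Submodule.quotientEquivOfIsCompl Xb D hXb.symm).trans
          (eD.trans (Submodule.equivMapOfInjective T.subtype hinj B)))))
  haveI hB'simple : IsSimpleModule ℤ B' :=
    IsSimpleModule.congr (Submodule.equivMapOfInjective T.subtype hinj B).symm
  obtain ⟨Y, hY⟩ := hM X B' hB'simple ⟨eQuot⟩ hBsummandM
  -- X ⊓ T = A'
  have hXT : X ⊓ T = A' := by
    apply le_antisymm
    · rintro z ⟨hzX, hzT⟩
      have hmk : A'.mkQ z ∈ Xb := hzX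
      have hmkD : A'.mkQ z ∈ D := ⟨⟨z, hzT⟩, rfl⟩
      have h0 : A'.mkQ z = 0 :=
        (Submodule.mem_bot ℤ).1 (hXb.disjoint.le_bot ⟨hmkD, hmk⟩)
      exact (Submodule.Quotient.mk_eq_zero A').1 h0
    · exact le_inf hAX hA'T
  -- conclusion
  refine ⟨Y.comap T.subtype, ?_, ?_⟩
  · rw [Submodule.disjoint_def]
    intro t htA htY
    have h1 : (t : M) ∈ X := hAX ⟨t, htA, rfl⟩
    have h2 : (t : M) ∈ Y := htY
    have h0 : (t : M) = 0 := (Submodule.mem_bot ℤ).1 (hY.disjoint.le_bot ⟨h1, h2⟩)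
    exact Subtype.ext h0
  · rw [codisjoint_iff, eq_top_iff]
    intro t _
    have htop : (t : M) ∈ X ⊔ Y := by rw [hY.codisjoint.eq_top]; trivial
    obtain ⟨x, hxX, y, hyY, hxy⟩ := Submodule.mem_sup.1 htop
    obtain ⟨n, hn, hnt⟩ := htor t
    have hxy0 : n • x + n • y = 0 := by
      rw [← smul_add, hxy, hnt]
    have hnx : n • x = 0 := by
      have h1 : n • x ∈ X := X.smul_mem _ hxX
      have h2 : n • x ∈ Y := by
        have h3 : n • x = -(n • y) := eq_neg_of_add_eq_zero_left hxy0
        rw [h3]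
        exact Y.neg_mem (Y.smul_mem _ hyY)
      exact (Submodule.mem_bot ℤ).1 (hY.disjoint.le_bot ⟨h1, h2⟩)
    have hny : n • y = 0 := by rwa [hnx, zero_add] at hxy0
    have hxT : x ∈ T := hmemT x ⟨n, hn, hnx⟩
    have hyT : y ∈ T := hmemT y ⟨n, hn, hny⟩
    have hxA' : x ∈ A' := hXT ▸ (⟨hxX, hxT⟩ : x ∈ X ⊓ T)
    obtain ⟨a, haA, ha⟩ := hxA'
    refine Submodule.mem_sup.2 ⟨a, haA, ⟨y, hyT⟩, hyY, ?_⟩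
    apply Subtype.ext
    show (a : M) + y = (t : M)
    have ha' : (a : M) = x := ha
    rw [ha']
    exact hxy
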